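/- Suppose X_1, …, X_n are mutually conditionally independent given W (the 'substitutes' information structure). Then I((X_1,…,X_n); W) ≤ Σ_{i=1}^n I(X_i; W), where (X_1,…,X_n) denotes the joint random variable. -/

import Mathlib

open scoped BigOperators

noncomputable section

variable {Ω : Type*} [Fintype Ω]

/-- `μ` is a probability mass function on the finite sample space `Ω`. -/
def IsPmf (μ : Ω → ℝ) : Prop := (∀ ω, 0 ≤ μ ω) ∧ ∑ ω, μ ω = 1

open Classical in
/-- Probability of the event `A` under the pmf `μ`. -/
def pr (μ : Ω → ℝ) (A : Ω → Prop) : ℝ := ∑ ω, if A ω then μ ω else 0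

/-- Conditional probability of `A` given `B` (with the convention `x / 0 = 0`). -/
def cpr (μ : Ω → ℝ) (A B : Ω → Prop) : ℝ := pr μ (fun ω => A ω ∧ B ω) / pr μ B

open Classical in
/-- Mutual information between the random variables `X` and `Y`,
`I(X;Y) = Σ_{x,y} P[X=x,Y=y] log( P[X=x,Y=y] / (P[X=x]·P[Y=y]) )`. -/
def mi (μ : Ω → ℝ) {S T : Type*} (X : Ω → S) (Y : Ω → T) : ℝ :=
  ∑ x ∈ Finset.univ.image X, ∑ y ∈ Finset.univ.image Y,
    pr μ (fun ω => X ω = x ∧ Y ω = y) *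
      Real.log (pr μ (fun ω => X ω = x ∧ Y ω = y) /
        (pr μ (fun ω => X ω = x) * pr μ (fun ω => Y ω = y)))

open Classical in
/-- Mutual information between `X` and `Y` conditioned on the event `B`,
`I(X;Y|B) = Σ_{x,y} P[X=x,Y=y|B] log( P[X=x,Y=y|B] / (P[X=x|B]·P[Y=y|B]) )`. -/
def miOn (μ : Ω → ℝ) {S T : Type*} (X : Ω → S) (Y : Ω → T) (B : Ω → Prop) : ℝ :=
  ∑ x ∈ Finset.univ.image X, ∑ y ∈ Finset.univ.image Y,
    cpr μ (fun ω => X ω = x ∧ Y ω = y) B *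
      Real.log (cpr μ (fun ω => X ω = x ∧ Y ω = y) B /
        (cpr μ (fun ω => X ω = x) B * cpr μ (fun ω => Y ω = y) B))

open Classical in
/-- Conditional mutual information `I(X;Y|Z) = E_Z[ I(X;Y|Z=z) ]`. -/
def cmi (μ : Ω → ℝ) {S T U : Type*} (X : Ω → S) (Y : Ω → T) (Z : Ω → U) : ℝ :=
  ∑ z ∈ Finset.univ.image Z,
    pr μ (fun ω => Z ω = z) * miOn μ X Y (fun ω => Z ω = z)

/-- The family `X i` is mutually independent conditioned on the event `B`. -/
def iIndepOn {n : ℕ} (μ : Ω → ℝ) {S : Type*} (X : Fin n → Ω → S) (B : Ω → Prop) : Prop :=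
  ∀ x : Fin n → S,
    cpr μ (fun ω => ∀ i, X i ω = x i) B = ∏ i, cpr μ (fun ω => X i ω = x i) B

/-- The family `X i` is mutually independent conditioned on `W`
(the "substitutes" information structure when `W` is the event to be predicted). -/
def iCondIndep {n : ℕ} (μ : Ω → ℝ) {S T : Type*} (X : Fin n → Ω → S) (W : Ω → T) : Prop :=
  ∀ w : T, pr μ (fun ω => W ω = w) ≠ 0 → iIndepOn μ X (fun ω => W ω = w)

-- helpers

lemma pr_nonneg (μ : Ω → ℝ) (hpos : ∀ ω, 0 ≤ μ ω) (A : Ω → Prop) : 0 ≤ pr μ A := by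
  classical
  unfold pr
  apply Finset.sum_nonneg
  intro ω _
  split <;> simp [hpos ω]

lemma le_pr (μ : Ω → ℝ) (hpos : ∀ ω, 0 ≤ μ ω) {A : Ω → Prop} {ω : Ω} (hA : A ω) :
    μ ω ≤ pr μ A := by
  classical
  have h1 : ∀ i ∈ Finset.univ, 0 ≤ (if A i then μ i else 0) := by
    intro i _; split <;> simp [hpos i]
  have := Finset.single_le_sum h1 (Finset.mem_univ ω)
  simp only [if_pos hA] at this
  simpa [pr] using this

open Classical in
lemma sum_pr_eq_one {S : Type*} (μ : Ω → ℝ) (hμ : IsPmf μ) (X : Ω → S) :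
    ∑ x ∈ Finset.univ.image X, pr μ (fun ω => X ω = x) = 1 := by
  classical
  unfold pr
  rw [Finset.sum_comm]
  have : ∀ ω ∈ Finset.univ, (∑ x ∈ Finset.univ.image X, if X ω = x then μ ω else 0) = μ ω := by
    intro ω _
    rw [Finset.sum_ite_eq]
    simp [Finset.mem_image_of_mem X (Finset.mem_univ ω)]
  rw [Finset.sum_congr rfl this, hμ.2]

open Classical in
lemma mi_eq_sum {S T : Type*} (μ : Ω → ℝ) (X : Ω → S) (Y : Ω → T) :
    mi μ X Y = ∑ ω, μ ω *
      Real.log (pr μ (fun ω' => X ω' = X ω ∧ Y ω' = Y ω) /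
        (pr μ (fun ω' => X ω' = X ω) * pr μ (fun ω' => Y ω' = Y ω))) := by
  classical
  unfold mi
  set L : S → T → ℝ := fun x y =>
    Real.log (pr μ (fun ω => X ω = x ∧ Y ω = y) /
        (pr μ (fun ω => X ω = x) * pr μ (fun ω => Y ω = y))) with hL
  have step1 : ∀ x ∈ Finset.univ.image X, ∀ y ∈ Finset.univ.image Y,
      pr μ (fun ω => X ω = x ∧ Y ω = y) * L x y
        = ∑ ω, if X ω = x ∧ Y ω = y then μ ω * L x y else 0 := by
    intro x _ y _
    rw [pr, Finset.sum_mul]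
    refine Finset.sum_congr rfl fun ω _ => ?_
    split <;> simp
  calc ∑ x ∈ Finset.univ.image X, ∑ y ∈ Finset.univ.image Y,
        pr μ (fun ω => X ω = x ∧ Y ω = y) * L x y
      = ∑ x ∈ Finset.univ.image X, ∑ y ∈ Finset.univ.image Y, ∑ ω,
          if X ω = x ∧ Y ω = y then μ ω * L x y else 0 := by
        refine Finset.sum_congr rfl fun x hx => Finset.sum_congr rfl fun y hy => step1 x hx y hy
    _ = ∑ x ∈ Finset.univ.image X, ∑ ω, ∑ y ∈ Finset.univ.image Y,
          if X ω = x ∧ Y ω = y then μ ω * L x y else 0 :=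
        Finset.sum_congr rfl fun x _ => Finset.sum_comm
    _ = ∑ ω, ∑ x ∈ Finset.univ.image X, ∑ y ∈ Finset.univ.image Y,
          if X ω = x ∧ Y ω = y then μ ω * L x y else 0 := Finset.sum_comm
    _ = ∑ ω, μ ω * L (X ω) (Y ω) := by
        refine Finset.sum_congr rfl fun ω _ => ?_
        simp only [ite_and]
        have inner : ∀ x ∈ Finset.univ.image X,
            (∑ y ∈ Finset.univ.image Y, if X ω = x then if Y ω = y then μ ω * L x y else 0 else 0)
              = if X ω = x then μ ω * L x (Y ω) else 0 := by
          intro x _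
          by_cases hx : X ω = x
          · simp only [if_pos hx]
            rw [Finset.sum_ite_eq]
            simp [Finset.mem_image_of_mem Y (Finset.mem_univ ω)]
          · simp [hx]
        rw [Finset.sum_congr rfl inner, Finset.sum_ite_eq]
        simp [Finset.mem_image_of_mem X (Finset.mem_univ ω)]

-- auxiliary lemmas for the main theorem

lemma log_identity {n : ℕ} (vW vX vXW : ℝ) (vi viW : Fin n → ℝ)
    (hvW : 0 < vW) (hvX : 0 < vX) (hvXW : 0 < vXW)
    (hvi : ∀ i, 0 < vi i) (hviW : ∀ i, 0 < viW i)
    (hCI : vXW = vW * ∏ i, viW i / vW) :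
    (∑ i, Real.log (viW i / (vi i * vW))) - Real.log (vXW / (vX * vW))
      = Real.log (vX / ∏ i, vi i) := by
  have hprod : 0 < ∏ i, vi i := Finset.prod_pos fun i _ => hvi i
  have h1 : Real.log vXW = Real.log vW + ∑ i, (Real.log (viW i) - Real.log vW) := by
    rw [hCI, Real.log_mul (ne_of_gt hvW)
        (ne_of_gt (Finset.prod_pos fun i _ => div_pos (hviW i) hvW)),
      Real.log_prod (fun i _ => ne_of_gt (div_pos (hviW i) hvW))]
    congr 1
    exact Finset.sum_congr rfl fun i _ => Real.log_div (ne_of_gt (hviW i)) (ne_of_gt hvW)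
  have h2 : ∀ i ∈ Finset.univ,
      Real.log (viW i / (vi i * vW))
        = Real.log (viW i) - (Real.log (vi i) + Real.log vW) := by
    intro i _
    rw [Real.log_div (ne_of_gt (hviW i)) (ne_of_gt (mul_pos (hvi i) hvW)),
      Real.log_mul (ne_of_gt (hvi i)) (ne_of_gt hvW)]
  rw [Finset.sum_congr rfl h2,
    Real.log_div (ne_of_gt hvXW) (ne_of_gt (mul_pos hvX hvW)),
    Real.log_mul (ne_of_gt hvX) (ne_of_gt hvW), h1,
    Real.log_div (ne_of_gt hvX) (ne_of_gt hprod),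
    Real.log_prod (fun i _ => ne_of_gt (hvi i))]
  simp only [Finset.sum_sub_distrib, Finset.sum_add_distrib, Finset.sum_const,
    Finset.card_univ, Fintype.card_fin, nsmul_eq_mul]
  ring

lemma point_bound {n : ℕ} (m vW vX vXW : ℝ) (vi viW : Fin n → ℝ)
    (hm : 0 ≤ m) (hvW : 0 < vW) (hvX : 0 < vX) (hvXW : 0 < vXW)
    (hvi : ∀ i, 0 < vi i) (hviW : ∀ i, 0 < viW i)
    (hCI : vXW = vW * ∏ i, viW i / vW) :
    m - m * ((∏ i, vi i) / vX)
      ≤ (∑ i, m * Real.log (viW i / (vi i * vW))) - m * Real.log (vXW / (vX * vW)) := by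
  have hprod : 0 < ∏ i, vi i := Finset.prod_pos fun i _ => hvi i
  have hlog : 1 - (∏ i, vi i) / vX ≤ Real.log (vX / ∏ i, vi i) := by
    have := Real.one_sub_inv_le_log_of_pos (div_pos hvX hprod)
    rwa [inv_div] at this
  rw [← Finset.mul_sum, ← mul_sub]
  rw [log_identity vW vX vXW vi viW hvW hvX hvXW hvi hviW hCI]
  calc m - m * ((∏ i, vi i) / vX) = m * (1 - (∏ i, vi i) / vX) := by ring
    _ ≤ m * Real.log (vX / ∏ i, vi i) := mul_le_mul_of_nonneg_left hlog hm


set_option maxHeartbeats 1000000 in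
/-- If `X 1, …, X n` are mutually conditionally independent given `W`
(the "substitutes" structure), then
`I((X 1,…,X n); W) ≤ Σ_i I(X i; W)`. -/
theorem mi_joint_le_sum_of_substitutes
    {n : ℕ} {S T : Type*} (μ : Ω → ℝ) (hμ : IsPmf μ)
    (X : Fin n → Ω → S) (W : Ω → T) (h : iCondIndep μ X W) :
    mi μ (fun ω => fun i => X i ω) W ≤ ∑ i, mi μ (X i) W := by
  classical
  obtain ⟨hpos, hsum⟩ := hμ
  set J : Ω → Fin n → S := fun ω => fun i => X i ω with hJ
  have hR : ∑ i : Fin n, mi μ (X i) W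
      = ∑ ω, ∑ i : Fin n, μ ω * Real.log (pr μ (fun ω' => X i ω' = X i ω ∧ W ω' = W ω) /
          (pr μ (fun ω' => X i ω' = X i ω) * pr μ (fun ω' => W ω' = W ω))) := by
    calc ∑ i : Fin n, mi μ (X i) W
        = ∑ i : Fin n, ∑ ω, μ ω * Real.log (pr μ (fun ω' => X i ω' = X i ω ∧ W ω' = W ω) /
            (pr μ (fun ω' => X i ω' = X i ω) * pr μ (fun ω' => W ω' = W ω))) :=
          Finset.sum_congr rfl fun i _ => mi_eq_sum μ (X i) W
      _ = _ := Finset.sum_comm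
  rw [hR, mi_eq_sum μ J W]
  -- pointwise bound
  have key : ∀ ω : Ω,
      μ ω - μ ω * ((∏ i, pr μ (fun ω' => X i ω' = X i ω)) / pr μ (fun ω' => J ω' = J ω))
        ≤ (∑ i : Fin n, μ ω * Real.log (pr μ (fun ω' => X i ω' = X i ω ∧ W ω' = W ω) /
            (pr μ (fun ω' => X i ω' = X i ω) * pr μ (fun ω' => W ω' = W ω))))
          - μ ω * Real.log (pr μ (fun ω' => J ω' = J ω ∧ W ω' = W ω) /
            (pr μ (fun ω' => J ω' = J ω) * pr μ (fun ω' => W ω' = W ω))) := by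
    intro ω
    by_cases hω : μ ω = 0
    · simp [hω]
    have hμω : 0 < μ ω := lt_of_le_of_ne (hpos ω) (Ne.symm hω)
    have hvW : 0 < pr μ (fun ω' => W ω' = W ω) := lt_of_lt_of_le hμω (le_pr μ hpos rfl)
    have hvX : 0 < pr μ (fun ω' => J ω' = J ω) := lt_of_lt_of_le hμω (le_pr μ hpos rfl)
    have hvXW : 0 < pr μ (fun ω' => J ω' = J ω ∧ W ω' = W ω) :=
      lt_of_lt_of_le hμω (le_pr μ hpos ⟨rfl, rfl⟩)
    have hvi : ∀ i, 0 < pr μ (fun ω' => X i ω' = X i ω) :=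
      fun i => lt_of_lt_of_le hμω (le_pr μ hpos rfl)
    have hviW : ∀ i, 0 < pr μ (fun ω' => X i ω' = X i ω ∧ W ω' = W ω) :=
      fun i => lt_of_lt_of_le hμω (le_pr μ hpos ⟨rfl, rfl⟩)
    have hev2 : (fun ω' => J ω' = J ω ∧ W ω' = W ω)
        = (fun ω' => (∀ i, X i ω' = X i ω) ∧ W ω' = W ω) :=
      funext fun ω' => propext (and_congr_left' funext_iff)
    have hCI0 := h (W ω) (ne_of_gt hvW) (fun i => X i ω)
    unfold cpr at hCI0
    rw [← hev2] at hCI0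
    have hCI : pr μ (fun ω' => J ω' = J ω ∧ W ω' = W ω)
        = pr μ (fun ω' => W ω' = W ω) *
            ∏ i, pr μ (fun ω' => X i ω' = X i ω ∧ W ω' = W ω) / pr μ (fun ω' => W ω' = W ω) := by
      rw [← hCI0, mul_comm, div_mul_cancel₀ _ (ne_of_gt hvW)]
    exact point_bound (μ ω) _ _ _ _ _ (le_of_lt hμω) hvW hvX hvXW hvi hviW hCI
  -- global bound on the correction term
  have hgroup : ∑ ω, μ ω * ((∏ i, pr μ (fun ω' => X i ω' = X i ω)) / pr μ (fun ω' => J ω' = J ω))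
      ≤ 1 := by
    calc ∑ ω, μ ω * ((∏ i, pr μ (fun ω' => X i ω' = X i ω)) / pr μ (fun ω' => J ω' = J ω))
        = ∑ x ∈ Finset.univ.image J, ∑ ω ∈ Finset.univ.filter (fun ω => J ω = x),
            μ ω * ((∏ i, pr μ (fun ω' => X i ω' = X i ω)) / pr μ (fun ω' => J ω' = J ω)) :=
          (Finset.sum_fiberwise_of_maps_to
            (fun ω _ => Finset.mem_image_of_mem J (Finset.mem_univ ω)) _).symm
      _ = ∑ x ∈ Finset.univ.image J, pr μ (fun ω => J ω = x) *
            ((∏ i, pr μ (fun ω' => X i ω' = x i)) / pr μ (fun ω' => J ω' = x)) := by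
          refine Finset.sum_congr rfl fun x hx => ?_
          have hc : ∀ ω ∈ Finset.univ.filter (fun ω => J ω = x),
              μ ω * ((∏ i, pr μ (fun ω' => X i ω' = X i ω)) / pr μ (fun ω' => J ω' = J ω))
                = μ ω * ((∏ i, pr μ (fun ω' => X i ω' = x i)) / pr μ (fun ω' => J ω' = x)) := by
            intro ω hω
            have hJω : J ω = x := (Finset.mem_filter.mp hω).2
            have hXω : ∀ i, X i ω = x i := fun i => congrFun hJω i
            simp only [hJω, hXω]
          rw [Finset.sum_congr rfl hc, ← Finset.sum_mul]
          congr 1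
          rw [pr, Finset.sum_filter]
          exact Finset.sum_congr rfl fun ω _ => by by_cases hx : J ω = x <;> simp [hx]
      _ ≤ ∑ x ∈ Finset.univ.image J, ∏ i, pr μ (fun ω' => X i ω' = x i) := by
          refine Finset.sum_le_sum fun x _ => ?_
          by_cases hq : pr μ (fun ω' => J ω' = x) = 0
          · rw [hq, div_zero, mul_zero]
            exact Finset.prod_nonneg fun i _ => pr_nonneg μ hpos _
          · rw [mul_comm, div_mul_cancel₀ _ hq]
      _ ≤ ∑ x ∈ Fintype.piFinset (fun i => Finset.univ.image (X i)),
            ∏ i, pr μ (fun ω' => X i ω' = x i) := by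
          apply Finset.sum_le_sum_of_subset_of_nonneg
          · intro x hx
            simp only [Finset.mem_image] at hx
            obtain ⟨ω, -, rfl⟩ := hx
            rw [Fintype.mem_piFinset]
            exact fun i => Finset.mem_image_of_mem (X i) (Finset.mem_univ ω)
          · intro x _ _
            exact Finset.prod_nonneg fun i _ => pr_nonneg μ hpos _
      _ = ∏ i, ∑ xi ∈ Finset.univ.image (X i), pr μ (fun ω' => X i ω' = xi) :=
          (Finset.prod_univ_sum (fun i => Finset.univ.image (X i))
            (fun i xi => pr μ (fun ω' => X i ω' = xi))).symm
      _ = 1 := by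
          rw [Finset.prod_congr rfl fun i _ => sum_pr_eq_one μ ⟨hpos, hsum⟩ (X i),
            Finset.prod_const_one]
  have hsum_le : ∑ ω, (μ ω - μ ω * ((∏ i, pr μ (fun ω' => X i ω' = X i ω)) /
        pr μ (fun ω' => J ω' = J ω)))
      ≤ ∑ ω, ((∑ i : Fin n, μ ω * Real.log (pr μ (fun ω' => X i ω' = X i ω ∧ W ω' = W ω) /
            (pr μ (fun ω' => X i ω' = X i ω) * pr μ (fun ω' => W ω' = W ω))))
          - μ ω * Real.log (pr μ (fun ω' => J ω' = J ω ∧ W ω' = W ω) /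
            (pr μ (fun ω' => J ω' = J ω) * pr μ (fun ω' => W ω' = W ω)))) :=
    Finset.sum_le_sum fun ω _ => key ω
  rw [Finset.sum_sub_distrib, Finset.sum_sub_distrib, hsum] at hsum_le
  linarith
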